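/- Let n > 4 and let m_1, …, m_n, M_1, …, M_n ∈ SL(2,ℂ). Define the n×n complex matrices B = (B_{i,j})_{1≤i,j≤n} and C = (C_{i,j})_{1≤i,j≤n} by B_{i,j} = −tr(m_i · M_j) and C_{i,j} = tr(m_i · M_j⁻¹). Then det B = 0 and det C = 0. -/
import Mathlib

/-- The trace of a `2×2` matrix in `SL(2,ℂ)`. -/
noncomputable def tr2 (x : Matrix.SpecialLinearGroup (Fin 2) ℂ) : ℂ :=
  Matrix.trace (x : Matrix (Fin 2) (Fin 2) ℂ)

lemma det_zero_of_factor (n : ℕ) (hn : 4 < n)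
    (A : Matrix (Fin n) (Fin 2 × Fin 2) ℂ) (D : Matrix (Fin 2 × Fin 2) (Fin n) ℂ) :
    (A * D).det = 0 := by
  by_contra h
  have hu : IsUnit (A * D) := (Matrix.isUnit_iff_isUnit_det _).2 (isUnit_iff_ne_zero.2 h)
  have h1 := Matrix.rank_of_isUnit _ hu
  have h2 : (A * D).rank ≤ 4 := by
    calc (A * D).rank ≤ D.rank := Matrix.rank_mul_le_right A D
    _ ≤ Fintype.card (Fin 2 × Fin 2) := Matrix.rank_le_card_height D
    _ = 4 := by simp
  rw [h1, Fintype.card_fin] at h2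
  omega

/-- **Generalised Magnus Main Lemma, vanishing of `det B` and `det C`.**
Let `n > 4` and `m_1,…,m_n, M_1,…,M_n ∈ SL(2,ℂ)`.  With `B_{i,j} = -tr(m_i M_j)` and
`C_{i,j} = tr(m_i M_j⁻¹)` (`1 ≤ i,j ≤ n`), one has `det B = 0` and `det C = 0`. -/
theorem det_B_eq_zero_and_det_C_eq_zero (n : ℕ) (hn : 4 < n)
    (m M : Fin n → Matrix.SpecialLinearGroup (Fin 2) ℂ) :
    (Matrix.of fun i j : Fin n => -tr2 (m i * M j)).det = 0 ∧
      (Matrix.of fun i j : Fin n => tr2 (m i * (M j)⁻¹)).det = 0 := by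
  constructor
  · have : (Matrix.of fun i j : Fin n => -tr2 (m i * M j)) =
      (Matrix.of fun (i : Fin n) (p : Fin 2 × Fin 2) => (m i : Matrix (Fin 2) (Fin 2) ℂ) p.1 p.2) *
      (Matrix.of fun (p : Fin 2 × Fin 2) (j : Fin n) => -((M j : Matrix (Fin 2) (Fin 2) ℂ) p.2 p.1)) := by
      ext i j
      simp [Matrix.mul_apply, tr2, Matrix.trace, Matrix.diag, Fintype.sum_prod_type,
        Finset.sum_comm, mul_comm]
    rw [this]
    exact det_zero_of_factor n hn _ _
  · have : (Matrix.of fun i j : Fin n => tr2 (m i * (M j)⁻¹)) =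
      (Matrix.of fun (i : Fin n) (p : Fin 2 × Fin 2) => (m i : Matrix (Fin 2) (Fin 2) ℂ) p.1 p.2) *
      (Matrix.of fun (p : Fin 2 × Fin 2) (j : Fin n) => (((M j)⁻¹ : Matrix.SpecialLinearGroup (Fin 2) ℂ) : Matrix (Fin 2) (Fin 2) ℂ) p.2 p.1) := by
      ext i j
      simp [Matrix.mul_apply, tr2, Matrix.trace, Matrix.diag, Fintype.sum_prod_type,
        Finset.sum_comm, mul_comm]
    rw [this]
    exact det_zero_of_factor n hn _ _
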